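/- Let m, n ≥ 1 and let E₋ := ℂ^m and E₊ := ℂ^n with their standard Hermitian inner products ⟨·,·⟩ and norms ‖·‖. Let M₋, Θ₋₋ : ℝ → (E₋ →L E₋), Θ₋₊ : ℝ → (E₊ →L E₋), Θ₊₋ : ℝ → (E₋ →L E₊), and M₊, Θ₊₊ : ℝ → (E₊ →L E₊) be continuous, and let c₋, c₊, δ, θ₋₋, θ₋₊, θ₊₋, θ₊₊ be real constants with θᵢⱼ ≥ 0, θ₊₋, θ₋₊ > 0, such that for all x ∈ ℝ: Re⟨M₋(x)v, v⟩ ≤ c₋‖v‖² for all v ∈ E₋; Re⟨M₊(x)w, w⟩ ≥ c₊‖w‖² for all w ∈ E₊; the operator norms satisfy ‖Θᵢⱼ(x)‖ ≤ θᵢⱼ; and c₊ − c₋ ≥ δ > θ₋₋ + θ₊₊ + 2√(θ₋₊θ₊₋). Let z > 0 satisfy θ₊₋z² − (δ − θ₋₋ − θ₊₊)z + θ₋₊ < 0. Suppose W₋ : ℝ → E₋ and W₊ : ℝ → E₊ are differentiable and satisfy W₋'(x) = M₋(x)W₋(x) + Θ₋₋(x)W₋(x) + Θ₋₊(x)W₊(x)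 and W₊'(x) = M₊(x)W₊(x) + Θ₊₋(x)W₋(x) + Θ₊₊(x)W₊(x) for all x. If ‖W₋(x₀)‖ ≤ z·‖W₊(x₀)‖ for some x₀, then ‖W₋(x)‖ ≤ z·‖W₊(x)‖ for all x ≥ x₀. -/

import Mathlib

open Filter Topology Set

lemma aux_tendsto_of_hasDerivAt {f : ℝ → ℝ} {a x : ℝ} (hf : HasDerivAt f a x) :
    Tendsto (fun t => (t - x)⁻¹ * (f t - f x)) (𝓝[>] x) (𝓝 a) := by
  have h1 := (hasDerivAt_iff_tendsto_slope.1 hf).mono_left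
    (nhdsWithin_mono x fun t (ht : t ∈ Ioi x) => Set.mem_compl_singleton_iff.mpr (Set.mem_Ioi.mp ht).ne')
  refine h1.congr fun t => ?_
  rw [slope_def_module, smul_eq_mul]

lemma aux_hasDerivAt_norm {E : Type*} [NormedAddCommGroup E] [InnerProductSpace ℂ E]
    {W : ℝ → E} {d : E} {x : ℝ} (hW : HasDerivAt W d x) (hx : W x ≠ 0) :
    HasDerivAt (fun t => ‖W t‖) ((inner ℂ d (W x) : ℂ).re / ‖W x‖) x := by
  have hq : HasDerivAt (fun t => (inner ℂ (W t) (W t) : ℂ))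
      ((inner ℂ (W x) d : ℂ) + (inner ℂ d (W x) : ℂ)) x := hW.inner ℂ hW
  have hre : HasDerivAt (fun t => ((inner ℂ (W t) (W t) : ℂ)).re)
      (((inner ℂ (W x) d : ℂ) + (inner ℂ d (W x) : ℂ)).re) x :=
    Complex.reCLM.hasFDerivAt.comp_hasDerivAt x hq
  have hvalx : ∀ t, ((inner ℂ (W t) (W t) : ℂ)).re = ‖W t‖ ^ 2 := fun t => by
    simpa using inner_self_eq_norm_sq (𝕜 := ℂ) (W t)
  have hne : ((inner ℂ (W x) (W x) : ℂ)).re ≠ 0 := by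
    rw [hvalx]
    exact pow_ne_zero _ (norm_ne_zero_iff.2 hx)
  have h2 := hre.sqrt hne
  have hfun : (fun t => Real.sqrt (((inner ℂ (W t) (W t) : ℂ)).re)) = fun t => ‖W t‖ := by
    funext t; rw [hvalx, Real.sqrt_sq (norm_nonneg _)]
  rw [hfun] at h2
  convert h2 using 1
  rw [hvalx, Real.sqrt_sq (norm_nonneg _), Complex.add_re]
  have hsym : ((inner ℂ (W x) d : ℂ)).re = ((inner ℂ d (W x) : ℂ)).re := by
    rw [← inner_conj_symm (W x) d, Complex.conj_re]
  rw [hsym, ← two_mul, mul_comm (2:ℝ) ‖W x‖, ← mul_comm (2:ℝ)]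
  rw [mul_div_mul_left _ _ (two_ne_zero)]

lemma aux_slope_zero {E : Type*} [NormedAddCommGroup E] [InnerProductSpace ℂ E]
    {W : ℝ → E} {d : E} {x : ℝ} (hW : HasDerivAt W d x) (hx : W x = 0) :
    Tendsto (fun t => (t - x)⁻¹ * (‖W t‖ - ‖W x‖)) (𝓝[>] x) (𝓝 ‖d‖) := by
  have h1 := (hasDerivAt_iff_tendsto_slope.1 hW).mono_left
    (nhdsWithin_mono x fun t (ht : t ∈ Ioi x) => Set.mem_compl_singleton_iff.mpr (Set.mem_Ioi.mp ht).ne')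
  refine h1.norm.congr' ?_
  filter_upwards [self_mem_nhdsWithin] with t ht
  rw [slope_def_module, norm_smul, hx, sub_zero, norm_zero, sub_zero, norm_inv,
    Real.norm_eq_abs, abs_of_pos (sub_pos.2 ht)]

set_option maxHeartbeats 1000000 in
/-- Invariant-cone conclusion of the quantitative tracking lemma for
approximately block-diagonal first-order systems `W' = (M + Θ)W`: under the
spectral gap condition `δ > θ₋₋ + θ₊₊ + 2√(θ₋₊θ₊₋)`, the cone
`{‖W₋‖ ≤ z‖W₊‖}` is forward invariant for any `z > 0` with
`θ₊₋z² − (δ − θ₋₋ − θ₊₊)z + θ₋₊ < 0`. -/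
theorem stmt16 (m n : ℕ) (hm : 1 ≤ m) (hn : 1 ≤ n)
    (Mm Θmm : ℝ → (EuclideanSpace ℂ (Fin m) →L[ℂ] EuclideanSpace ℂ (Fin m)))
    (Θmp : ℝ → (EuclideanSpace ℂ (Fin n) →L[ℂ] EuclideanSpace ℂ (Fin m)))
    (Θpm : ℝ → (EuclideanSpace ℂ (Fin m) →L[ℂ] EuclideanSpace ℂ (Fin n)))
    (Mp Θpp : ℝ → (EuclideanSpace ℂ (Fin n) →L[ℂ] EuclideanSpace ℂ (Fin n)))
    (hMmc : Continuous Mm) (hΘmmc : Continuous Θmm) (hΘmpc : Continuous Θmp)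
    (hΘpmc : Continuous Θpm) (hMpc : Continuous Mp) (hΘppc : Continuous Θpp)
    (cm cp δ θmm θmp θpm θpp : ℝ)
    (hθmm : 0 ≤ θmm) (hθpp : 0 ≤ θpp) (hθmp : 0 < θmp) (hθpm : 0 < θpm)
    (hMm : ∀ (x : ℝ) (v : EuclideanSpace ℂ (Fin m)),
      (inner ℂ (Mm x v) v : ℂ).re ≤ cm * ‖v‖ ^ 2)
    (hMp : ∀ (x : ℝ) (w : EuclideanSpace ℂ (Fin n)),
      cp * ‖w‖ ^ 2 ≤ (inner ℂ (Mp x w) w : ℂ).re)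
    (hnmm : ∀ x, ‖Θmm x‖ ≤ θmm) (hnmp : ∀ x, ‖Θmp x‖ ≤ θmp)
    (hnpm : ∀ x, ‖Θpm x‖ ≤ θpm) (hnpp : ∀ x, ‖Θpp x‖ ≤ θpp)
    (hgap : δ ≤ cp - cm)
    (hδ : θmm + θpp + 2 * Real.sqrt (θmp * θpm) < δ)
    (z : ℝ) (hz : 0 < z)
    (hzq : θpm * z ^ 2 - (δ - θmm - θpp) * z + θmp < 0)
    (Wm : ℝ → EuclideanSpace ℂ (Fin m)) (Wp : ℝ → EuclideanSpace ℂ (Fin n))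
    (hWm : ∀ x, HasDerivAt Wm (Mm x (Wm x) + Θmm x (Wm x) + Θmp x (Wp x)) x)
    (hWp : ∀ x, HasDerivAt Wp (Mp x (Wp x) + Θpm x (Wm x) + Θpp x (Wp x)) x)
    (x₀ : ℝ) (hx₀ : ‖Wm x₀‖ ≤ z * ‖Wp x₀‖) :
    ∀ x : ℝ, x₀ ≤ x → ‖Wm x‖ ≤ z * ‖Wp x‖ := by
  intro x₁ hx₁
  set u : ℝ → ℝ := fun t => ‖Wm t‖ - z * ‖Wp t‖ with hu
  set K : ℝ := cm + θmm + z * θpm with hK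
  have hQ : θpm * z ^ 2 - (cp - cm - θmm - θpp) * z + θmp ≤ 0 := by
    nlinarith [mul_le_mul_of_nonneg_right hgap hz.le]
  -- upper bound for the right slope of ‖Wm ·‖
  have keyA : ∀ x : ℝ, ∃ a : ℝ, a ≤ (cm + θmm) * ‖Wm x‖ + θmp * ‖Wp x‖ ∧
      Tendsto (fun t => (t - x)⁻¹ * (‖Wm t‖ - ‖Wm x‖)) (𝓝[>] x) (𝓝 a) := by
    intro x
    by_cases hx : Wm x = 0
    · refine ⟨‖Θmp x (Wp x)‖, ?_, ?_⟩
      · have h1 := (Θmp x).le_opNorm (Wp x)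
        have h2 := mul_le_mul_of_nonneg_right (hnmp x) (norm_nonneg (Wp x))
        rw [hx, norm_zero]
        linarith
      · have := aux_slope_zero (hWm x) hx
        simpa [hx] using this
    · refine ⟨(inner ℂ (Mm x (Wm x) + Θmm x (Wm x) + Θmp x (Wp x)) (Wm x) : ℂ).re / ‖Wm x‖,
        ?_, aux_tendsto_of_hasDerivAt (aux_hasDerivAt_norm (hWm x) hx)⟩
      rw [div_le_iff₀ (norm_pos_iff.2 hx)]
      rw [inner_add_left, inner_add_left, Complex.add_re, Complex.add_re]
      have e1 := hMm x (Wm x)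
      have e2 : ((inner ℂ (Θmm x (Wm x)) (Wm x) : ℂ)).re ≤ θmm * ‖Wm x‖ * ‖Wm x‖ := by
        have h1 : ((inner ℂ (Θmm x (Wm x)) (Wm x) : ℂ)).re ≤
            ‖(inner ℂ (Θmm x (Wm x)) (Wm x) : ℂ)‖ := Complex.re_le_norm _
        have h2 := norm_inner_le_norm (𝕜 := ℂ) (Θmm x (Wm x)) (Wm x)
        have h3 := (Θmm x).le_opNorm (Wm x)
        have h4 := mul_le_mul_of_nonneg_right (hnmm x) (norm_nonneg (Wm x))
        have h6 := mul_le_mul_of_nonneg_right (le_trans h3 h4) (norm_nonneg (Wm x))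
        linarith
      have e3 : ((inner ℂ (Θmp x (Wp x)) (Wm x) : ℂ)).re ≤ θmp * ‖Wp x‖ * ‖Wm x‖ := by
        have h1 : ((inner ℂ (Θmp x (Wp x)) (Wm x) : ℂ)).re ≤
            ‖(inner ℂ (Θmp x (Wp x)) (Wm x) : ℂ)‖ := Complex.re_le_norm _
        have h2 := norm_inner_le_norm (𝕜 := ℂ) (Θmp x (Wp x)) (Wm x)
        have h3 := (Θmp x).le_opNorm (Wp x)
        have h4 := mul_le_mul_of_nonneg_right (hnmp x) (norm_nonneg (Wp x))
        have h6 := mul_le_mul_of_nonneg_right (le_trans h3 h4) (norm_nonneg (Wm x))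
        linarith
      have hsum := add_le_add (add_le_add e1 e2) e3
      have hid : cm * ‖Wm x‖ ^ 2 + θmm * ‖Wm x‖ * ‖Wm x‖ + θmp * ‖Wp x‖ * ‖Wm x‖
          = ((cm + θmm) * ‖Wm x‖ + θmp * ‖Wp x‖) * ‖Wm x‖ := by ring
      linarith
  -- lower bound for the right slope of ‖Wp ·‖
  have keyB : ∀ x : ℝ, ∃ b : ℝ, (cp - θpp) * ‖Wp x‖ - θpm * ‖Wm x‖ ≤ b ∧
      Tendsto (fun t => (t - x)⁻¹ * (‖Wp t‖ - ‖Wp x‖)) (𝓝[>] x) (𝓝 b) := by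
    intro x
    by_cases hx : Wp x = 0
    · refine ⟨‖Θpm x (Wm x)‖, ?_, ?_⟩
      · rw [hx, norm_zero]
        nlinarith [norm_nonneg (Θpm x (Wm x)), norm_nonneg (Wm x)]
      · have := aux_slope_zero (hWp x) hx
        simpa [hx] using this
    · refine ⟨(inner ℂ (Mp x (Wp x) + Θpm x (Wm x) + Θpp x (Wp x)) (Wp x) : ℂ).re / ‖Wp x‖,
        ?_, aux_tendsto_of_hasDerivAt (aux_hasDerivAt_norm (hWp x) hx)⟩
      rw [le_div_iff₀ (norm_pos_iff.2 hx)]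
      rw [inner_add_left, inner_add_left, Complex.add_re, Complex.add_re]
      have e1 := hMp x (Wp x)
      have e2 : -(θpm * ‖Wm x‖ * ‖Wp x‖) ≤ ((inner ℂ (Θpm x (Wm x)) (Wp x) : ℂ)).re := by
        have h1 : |((inner ℂ (Θpm x (Wm x)) (Wp x) : ℂ)).re| ≤
            ‖(inner ℂ (Θpm x (Wm x)) (Wp x) : ℂ)‖ := Complex.abs_re_le_norm _
        have h2 := norm_inner_le_norm (𝕜 := ℂ) (Θpm x (Wm x)) (Wp x)
        have h3 := (Θpm x).le_opNorm (Wm x)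
        have h4 := mul_le_mul_of_nonneg_right (hnpm x) (norm_nonneg (Wm x))
        have h5 := neg_abs_le ((inner ℂ (Θpm x (Wm x)) (Wp x) : ℂ)).re
        have h6 := mul_le_mul_of_nonneg_right (le_trans h3 h4) (norm_nonneg (Wp x))
        linarith
      have e3 : -(θpp * ‖Wp x‖ * ‖Wp x‖) ≤ ((inner ℂ (Θpp x (Wp x)) (Wp x) : ℂ)).re := by
        have h1 : |((inner ℂ (Θpp x (Wp x)) (Wp x) : ℂ)).re| ≤
            ‖(inner ℂ (Θpp x (Wp x)) (Wp x) : ℂ)‖ := Complex.abs_re_le_norm _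
        have h2 := norm_inner_le_norm (𝕜 := ℂ) (Θpp x (Wp x)) (Wp x)
        have h3 := (Θpp x).le_opNorm (Wp x)
        have h4 := mul_le_mul_of_nonneg_right (hnpp x) (norm_nonneg (Wp x))
        have h5 := neg_abs_le ((inner ℂ (Θpp x (Wp x)) (Wp x) : ℂ)).re
        have h6 := mul_le_mul_of_nonneg_right (le_trans h3 h4) (norm_nonneg (Wp x))
        linarith
      have hsum := add_le_add (add_le_add e1 e2) e3
      have hid : cp * ‖Wp x‖ ^ 2 + -(θpm * ‖Wm x‖ * ‖Wp x‖) + -(θpp * ‖Wp x‖ * ‖Wp x‖)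
          = ((cp - θpp) * ‖Wp x‖ - θpm * ‖Wm x‖) * ‖Wp x‖ := by ring
      linarith
  have key : ∀ x : ℝ, ∃ c : ℝ, c ≤ K * u x ∧
      Tendsto (fun t => (t - x)⁻¹ * (u t - u x)) (𝓝[>] x) (𝓝 c) := by
    intro x
    obtain ⟨a, ha, hta⟩ := keyA x
    obtain ⟨b, hb, htb⟩ := keyB x
    refine ⟨a - z * b, ?_, ?_⟩
    · have hzb := mul_le_mul_of_nonneg_left hb hz.le
      have hQh := mul_nonpos_of_nonpos_of_nonneg hQ (norm_nonneg (Wp x))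
      simp only [hu, hK]
      have hid : ((cm + θmm) * ‖Wm x‖ + θmp * ‖Wp x‖)
            - z * ((cp - θpp) * ‖Wp x‖ - θpm * ‖Wm x‖)
          = (cm + θmm + z * θpm) * (‖Wm x‖ - z * ‖Wp x‖)
            + (θpm * z ^ 2 - (cp - cm - θmm - θpp) * z + θmp) * ‖Wp x‖ := by ring
      linarith [hQh, ha, hzb, hid]
    · have := hta.sub (htb.const_mul z)
      refine this.congr fun t => ?_
      simp only [hu]
      ring
  -- continuity
  have hcWm : Continuous Wm := continuous_iff_continuousAt.2 fun t => (hWm t).continuousAt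
  have hcWp : Continuous Wp := continuous_iff_continuousAt.2 fun t => (hWp t).continuousAt
  have hcu : Continuous u := hcWm.norm.sub (continuous_const.mul hcWp.norm)
  -- Gronwall
  have main := le_gronwallBound_of_liminf_deriv_right_le (f := u) (f' := fun t => K * u t)
    (δ := 0) (K := K) (ε := 0) (a := x₀) (b := x₁) hcu.continuousOn
    (fun x _ r hr => by
      obtain ⟨c, hc, htc⟩ := key x
      exact ((htc.eventually_lt_const (lt_of_le_of_lt hc hr)).frequently))
    (by simpa [hu] using sub_nonpos.2 hx₀)
    (fun x _ => by simp)
  have hfin := main x₁ ⟨hx₁, le_rfl⟩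
  rw [gronwallBound_ε0_δ0] at hfin
  simp only [hu] at hfin
  linarith
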